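/- Let X be an I-continuous T0 space in which the relation ≪_I has the interpolation property (x ≪_I z implies x ≪_I y ≪_I z for some y). Then for every subset Y ⊆ X, ↟_I Y = int_{σ_I}(↑Y), where ↑Y is the upper closure of Y. -/
import Mathlib


universe u

/-- The specialisation order of a topological space: `x ≤ y` iff `x ∈ closure {y}`. -/
def sle {X : Type u} [TopologicalSpace X] (x y : X) : Prop :=
  x ∈ closure ({y} : Set X)

/-- Upper bounds with respect to the specialisation order. -/
def sUB {X : Type u} [TopologicalSpace X] (A : Set X) : Set X :=
  {u | ∀ a ∈ A, sle a u}

/-- `s` is the least upper bound of `A` with respect to the specialisation order. -/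
def sIsLUB {X : Type u} [TopologicalSpace X] (A : Set X) (s : X) : Prop :=
  s ∈ sUB A ∧ ∀ u ∈ sUB A, sle s u

/-- `x ≪_I y`: for every irreducible set `E` having a supremum above `y`,
some element of `E` is above `x`. -/
def IBelow {X : Type u} [TopologicalSpace X] (x y : X) : Prop :=
  ∀ E : Set X, IsIrreducible E → ∀ s : X, sIsLUB E s → sle y s → ∃ e ∈ E, sle x e

/-- `X` is I-continuous: for every `y`, the set `↡_I y` is irreducible with
least upper bound `y`. -/
def IContinuous (X : Type u) [TopologicalSpace X] : Prop :=
  ∀ y : X, IsIrreducible {x | IBelow x y} ∧ sIsLUB {x | IBelow x y} y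

/-- `X` is I-stable: `↟_I U` is open for every open `U`. -/
def IStable (X : Type u) [TopologicalSpace X] : Prop :=
  ∀ U : Set X, IsOpen U → IsOpen {x : X | ∃ a ∈ U, IBelow a x}

/-- `X` is sup-sober: every closed irreducible set with a supremum is the closure
of that supremum. -/
def SupSober (X : Type u) [TopologicalSpace X] : Prop :=
  ∀ F : Set X, IsClosed F → IsIrreducible F → ∀ s : X, sIsLUB F s → F = closure ({s} : Set X)

/-- The collection σ_I: upper sets (w.r.t. specialisation) inaccessible by suprema of
irreducible sets. -/
def sigmaI (X : Type u) [TopologicalSpace X] : Set (Set X) :=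
  {U | (∀ a ∈ U, ∀ b : X, sle a b → b ∈ U) ∧
       ∀ E : Set X, IsIrreducible E → ∀ s : X, sIsLUB E s → s ∈ U → (U ∩ E).Nonempty}

/-- The irreducibly derived topology τ_SI: open sets inaccessible by suprema of
irreducible sets. -/
def tauSI (X : Type u) [TopologicalSpace X] : Set (Set X) :=
  {U | IsOpen U ∧ ∀ E : Set X, IsIrreducible E → ∀ s : X, sIsLUB E s → s ∈ U → (E ∩ U).Nonempty}

/-- The net `x` I-converges to `y`: there is an irreducible set `E` with a supremum above `y`,
all of whose elements are eventual lower bounds of the net. -/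
def IConv {X : Type u} [TopologicalSpace X] {ι : Type u} [Preorder ι]
    (x : ι → X) (y : X) : Prop :=
  ∃ E : Set X, IsIrreducible E ∧
    (∀ e ∈ E, ∃ i₀ : ι, ∀ i : ι, i₀ ≤ i → sle e (x i)) ∧
    ∃ s : X, sIsLUB E s ∧ sle y s

/-- `D` is directed with respect to the specialisation order. -/
def sDirectedOn {X : Type u} [TopologicalSpace X] (D : Set X) : Prop :=
  ∀ a ∈ D, ∀ b ∈ D, ∃ c ∈ D, sle a c ∧ sle b c

/-- Way-below in the specialisation poset, via nonempty directed sets. -/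
def sWayBelow {X : Type u} [TopologicalSpace X] (x y : X) : Prop :=
  ∀ D : Set X, D.Nonempty → sDirectedOn D → ∀ s : X, sIsLUB D s → sle y s → ∃ d ∈ D, sle x d

/-- `X` is a DI space: the supremum of any irreducible set is also attained as the supremum
of a nonempty directed subset of its lower closure. -/
def DISpace (X : Type u) [TopologicalSpace X] : Prop :=
  ∀ E : Set X, IsIrreducible E → ∀ s : X, sIsLUB E s →
    ∃ D : Set X, D.Nonempty ∧ sDirectedOn D ∧ (∀ d ∈ D, ∃ e ∈ E, sle d e) ∧ sIsLUB D s

/-- `U` is τ_I-open: every net that I-converges to a point of `U` is eventually in `U`. -/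
def TauIOpen {X : Type u} [TopologicalSpace X] (U : Set X) : Prop :=
  ∀ (ι : Type u) [Preorder ι] [Nonempty ι],
    (∀ i j : ι, ∃ k : ι, i ≤ k ∧ j ≤ k) →
    ∀ x : ι → X, ∀ y ∈ U, IConv x y →
    ∃ i₀ : ι, ∀ i : ι, i₀ ≤ i → x i ∈ U


lemma sle_refl {X : Type u} [TopologicalSpace X] (x : X) : sle x x :=
  subset_closure rfl

lemma sle_trans {X : Type u} [TopologicalSpace X] {x y z : X}
    (h1 : sle x y) (h2 : sle y z) : sle x z := by
  have : closure ({y} : Set X) ⊆ closure ({z} : Set X) :=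
    closure_minimal (Set.singleton_subset_iff.2 h2) isClosed_closure
  exact this h1

lemma IBelow_le_left {X : Type u} [TopologicalSpace X] {x' x y : X}
    (h : sle x' x) (hb : IBelow x y) : IBelow x' y := by
  intro E hE s hs hys
  obtain ⟨e, heE, hxe⟩ := hb E hE s hs hys
  exact ⟨e, heE, sle_trans h hxe⟩

lemma IBelow_le_right {X : Type u} [TopologicalSpace X] {x y y' : X}
    (hb : IBelow x y) (h : sle y y') : IBelow x y' := by
  intro E hE s hs hys
  exact hb E hE s hs (sle_trans h hys)

lemma IBelow.sle {X : Type u} [TopologicalSpace X] {x y : X}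
    (h : IBelow x y) : sle x y := by
  have hirr : IsIrreducible ({y} : Set X) := isIrreducible_singleton
  have hlub : sIsLUB ({y} : Set X) y := by
    constructor
    · intro a ha; cases ha; exact sle_refl y
    · intro u hu; exact hu y rfl
  obtain ⟨e, he, hxe⟩ := h {y} hirr y hlub (sle_refl y)
  cases he; exact hxe

/-- If `X` is I-continuous and `≪_I` interpolates, then `↟_I Y = int_{σ_I}(↑Y)`. -/
theorem stmt13 {X : Type u} [TopologicalSpace X] [T0Space X]
    (hcont : IContinuous X)
    (hint : ∀ x z : X, IBelow x z → ∃ y : X, IBelow x y ∧ IBelow y z)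
    (Y : Set X) :
    {x : X | ∃ y ∈ Y, IBelow y x} =
      ⋃₀ {U | U ∈ sigmaI X ∧ U ⊆ {x : X | ∃ y ∈ Y, sle y x}} := by
  ext x
  simp only [Set.mem_setOf_eq, Set.mem_sUnion, Set.mem_setOf_eq]
  constructor
  · rintro ⟨y, hyY, hyx⟩
    refine ⟨{z : X | ∃ y ∈ Y, IBelow y z}, ⟨⟨?_, ?_⟩, ?_⟩, y, hyY, hyx⟩
    · rintro a ⟨y', hy', hba⟩ b hab
      exact ⟨y', hy', IBelow_le_right hba hab⟩
    · rintro E hE s hs ⟨y', hy', hy's⟩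
      obtain ⟨z, hy'z, hzs⟩ := hint y' s hy's
      obtain ⟨e, heE, hze⟩ := hzs E hE s hs (sle_refl s)
      exact ⟨e, ⟨y', hy', IBelow_le_right hy'z hze⟩, heE⟩
    · rintro z ⟨y', hy', hb⟩
      exact ⟨y', hy', hb.sle⟩
  · rintro ⟨U, ⟨⟨hup, hinacc⟩, hsub⟩, hxU⟩
    obtain ⟨hirr, hlub⟩ := hcont x
    obtain ⟨z, hzU, hzx⟩ := hinacc _ hirr x hlub hxU
    obtain ⟨y, hyY, hyz⟩ := hsub hzU
    exact ⟨y, hyY, IBelow_le_left hyz hzx⟩
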